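/- Let p be a prime with p ≡ 3 (mod 8) and set d = 4p. Then the 2-adic valuation of L(χ_d, −1) is exactly 1, i.e. v₂( (1/(2d)) · Σ_{a=1}^{d} χ_d(a) a² ) = 1. -/
import Mathlib

open Finset

private def chi (p a : ℕ) : ℤ := if Odd a then jacobiSym (p : ℤ) a else 0

private lemma chi_recip {p : ℕ} (hp4 : p % 4 = 3) {a : ℕ} (ha : Odd a) :
    jacobiSym (p : ℤ) a = (if a % 4 = 1 then 1 else -1) * jacobiSym (a : ℤ) p := by
  have h2 : a % 2 = 1 := Nat.odd_iff.mp ha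
  have hop : Odd p := Nat.odd_iff.mpr (by omega)
  by_cases h4 : a % 4 = 1
  · rw [if_pos h4, one_mul, jacobiSym.quadratic_reciprocity_one_mod_four h4 hop]
  · have h4' : a % 4 = 3 := by omega
    have := jacobiSym.quadratic_reciprocity_three_mod_four h4' hp4
    rw [if_neg h4]
    linarith

private lemma chi_add_two_p {p : ℕ} (hp4 : p % 4 = 3) (a : ℕ) :
    chi p (a + 2 * p) = - chi p a := by
  by_cases ha : Odd a
  · have ha2 : a % 2 = 1 := Nat.odd_iff.mp ha
    have ha' : Odd (a + 2 * p) := Nat.odd_iff.mpr (by omega)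
    rw [chi, chi, if_pos ha', if_pos ha, chi_recip hp4 ha', chi_recip hp4 ha]
    have hJ : jacobiSym ((a + 2 * p : ℕ) : ℤ) p = jacobiSym (a : ℤ) p := by
      apply jacobiSym.mod_left'
      have : ((a + 2 * p : ℕ) : ℤ) = (a : ℤ) + (p : ℤ) * 2 := by push_cast; ring
      rw [this, Int.add_mul_emod_self_left]
    rw [hJ]
    by_cases h4 : a % 4 = 1
    · rw [if_neg (by omega), if_pos h4]; ring
    · rw [if_pos (by omega), if_neg h4]; ring
  · have ha' : ¬ Odd (a + 2 * p) := by
      rw [Nat.odd_iff] at *; omega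
    rw [chi, chi, if_neg ha', if_neg ha, neg_zero]

private lemma chi_sub_two_p {p : ℕ} (hp4 : p % 4 = 3) {b : ℕ} (hb : b ≤ 2 * p) :
    chi p (2 * p - b) = - chi p b := by
  have hop : Odd p := Nat.odd_iff.mpr (by omega)
  by_cases hbo : Odd b
  · have hb2 : b % 2 = 1 := Nat.odd_iff.mp hbo
    have hbo' : Odd (2 * p - b) := Nat.odd_iff.mpr (by omega)
    rw [chi, chi, if_pos hbo', if_pos hbo, chi_recip hp4 hbo', chi_recip hp4 hbo]
    have hJ : jacobiSym ((2 * p - b : ℕ) : ℤ) p = - jacobiSym (b : ℤ) p := by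
      have h1 : jacobiSym ((2 * p - b : ℕ) : ℤ) p = jacobiSym (-(b : ℤ)) p := by
        apply jacobiSym.mod_left'
        have : ((2 * p - b : ℕ) : ℤ) = -(b : ℤ) + (p : ℤ) * 2 := by omega
        rw [this, Int.add_mul_emod_self_left]
      rw [h1, jacobiSym.neg _ hop, ZMod.χ₄_nat_three_mod_four hp4, neg_one_mul]
    rw [hJ]
    have h4 : (2 * p - b) % 4 = b % 4 := by omega
    rw [h4]
    by_cases h1 : b % 4 = 1
    · rw [if_pos h1]; ring
    · rw [if_neg h1]; ring
  · have hbo' : ¬ Odd (2 * p - b) := by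
      rw [Nat.odd_iff] at *; omega
    rw [chi, chi, if_neg hbo', if_neg hbo, neg_zero]

private lemma chi_self {p : ℕ} (hp : p.Prime) (hp4 : p % 4 = 3) : chi p p = 0 := by
  have : NeZero p := ⟨hp.pos.ne'⟩
  rw [chi, if_pos (Nat.odd_iff.mpr (by omega))]
  rw [jacobiSym.eq_zero_iff_not_coprime]
  simp [Int.gcd_natCast_natCast, Nat.gcd_self, hp.ne_one]

private lemma chi_units {p : ℕ} (hp : p.Prime) {a : ℕ} (h1 : 1 ≤ a) (h2 : a < p)
    (ha : Odd a) : chi p a = 1 ∨ chi p a = -1 := by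
  rw [chi, if_pos ha]
  apply jacobiSym.eq_one_or_neg_one
  have hnd : ¬ p ∣ a := fun hd => by have := Nat.le_of_dvd (by omega) hd; omega
  have : Nat.Coprime p a := (Nat.Prime.coprime_iff_not_dvd hp).mpr hnd
  simpa [Int.gcd_natCast_natCast] using this

private lemma sum_identity {p : ℕ} (hp : p.Prime) (hp4 : p % 4 = 3) :
    ∑ a ∈ Finset.Icc 1 (4 * p), chi p a * (a : ℤ) ^ 2
      = -8 * p * ∑ a ∈ Finset.Icc 1 (p - 1), chi p a * ((a : ℤ) - p) := by
  have hp0 : 0 < p := hp.pos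
  have hsplit1 : ∑ a ∈ Finset.Icc 1 (4 * p), chi p a * (a : ℤ) ^ 2
      = ∑ a ∈ Finset.Icc 1 (2 * p), chi p a * (a : ℤ) ^ 2
        + ∑ a ∈ Finset.Icc (2 * p + 1) (4 * p), chi p a * (a : ℤ) ^ 2 := by
    rw [← Finset.sum_union (Finset.disjoint_left.mpr fun x hx hx' => by
      simp only [Finset.mem_Icc] at hx hx'; omega)]
    congr 1
    ext x
    simp only [Finset.mem_union, Finset.mem_Icc]
    omega
  have hre1 : ∑ a ∈ Finset.Icc (2 * p + 1) (4 * p), chi p a * (a : ℤ) ^ 2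
      = ∑ a ∈ Finset.Icc 1 (2 * p), chi p (a + 2 * p) * ((a + 2 * p : ℕ) : ℤ) ^ 2 := by
    apply Finset.sum_nbij' (fun a => a - 2 * p) (fun b => b + 2 * p) <;>
      simp only [Finset.mem_Icc] <;> intro a ha
    · omega
    · omega
    · omega
    · omega
    · have : a - 2 * p + 2 * p = a := by omega
      rw [this]
  have hstep : ∀ a ∈ Finset.Icc 1 (2 * p),
      chi p a * (a : ℤ) ^ 2 + chi p (a + 2 * p) * ((a + 2 * p : ℕ) : ℤ) ^ 2
        = (-4 * p) * (chi p a * ((p : ℤ) + a)) := by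
    intro a _
    rw [chi_add_two_p hp4 a]
    push_cast
    ring
  have hS1 : ∑ a ∈ Finset.Icc 1 (4 * p), chi p a * (a : ℤ) ^ 2
      = (-4 * p) * ∑ a ∈ Finset.Icc 1 (2 * p), chi p a * ((p : ℤ) + a) := by
    rw [hsplit1, hre1, ← Finset.sum_add_distrib, Finset.mul_sum]
    exact Finset.sum_congr rfl hstep
  have hsplit2 : ∑ a ∈ Finset.Icc 1 (2 * p), chi p a * ((p : ℤ) + a)
      = ∑ a ∈ Finset.Icc 1 p, chi p a * ((p : ℤ) + a)
        + ∑ a ∈ Finset.Icc (p + 1) (2 * p), chi p a * ((p : ℤ) + a) := by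
    rw [← Finset.sum_union (Finset.disjoint_left.mpr fun x hx hx' => by
      simp only [Finset.mem_Icc] at hx hx'; omega)]
    congr 1
    ext x
    simp only [Finset.mem_union, Finset.mem_Icc]
    omega
  have hre2 : ∑ a ∈ Finset.Icc (p + 1) (2 * p), chi p a * ((p : ℤ) + a)
      = ∑ b ∈ Finset.Icc 0 (p - 1), chi p (2 * p - b) * ((p : ℤ) + ((2 * p - b : ℕ) : ℤ)) := by
    apply Finset.sum_nbij' (fun a => 2 * p - a) (fun b => 2 * p - b) <;>
      simp only [Finset.mem_Icc] <;> intro a ha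
    · omega
    · omega
    · omega
    · omega
    · have : 2 * p - (2 * p - a) = a := by omega
      rw [this]
  have hterm2 : ∀ b ∈ Finset.Icc 0 (p - 1),
      chi p (2 * p - b) * ((p : ℤ) + ((2 * p - b : ℕ) : ℤ))
        = chi p b * ((b : ℤ) - 3 * p) := by
    intro b hb
    simp only [Finset.mem_Icc] at hb
    rw [chi_sub_two_p hp4 (by omega)]
    have : ((2 * p - b : ℕ) : ℤ) = 2 * (p : ℤ) - b := by omega
    rw [this]
    ring
  have hdrop1 : ∑ a ∈ Finset.Icc 1 p, chi p a * ((p : ℤ) + a)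
      = ∑ a ∈ Finset.Icc 1 (p - 1), chi p a * ((p : ℤ) + a) := by
    symm
    apply Finset.sum_subset (Finset.Icc_subset_Icc le_rfl (by omega))
    intro x hx hnx
    simp only [Finset.mem_Icc] at hx hnx
    have : x = p := by omega
    rw [this, chi_self hp hp4, zero_mul]
  have hdrop2 : ∑ b ∈ Finset.Icc 0 (p - 1), chi p b * ((b : ℤ) - 3 * p)
      = ∑ b ∈ Finset.Icc 1 (p - 1), chi p b * ((b : ℤ) - 3 * p) := by
    symm
    apply Finset.sum_subset (Finset.Icc_subset_Icc (by omega) le_rfl)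
    intro x hx hnx
    simp only [Finset.mem_Icc] at hx hnx
    have hx0 : x = 0 := by omega
    rw [hx0]
    have : chi p 0 = 0 := by simp [chi]
    rw [this, zero_mul]
  have hT : ∑ a ∈ Finset.Icc 1 (2 * p), chi p a * ((p : ℤ) + a)
      = 2 * ∑ a ∈ Finset.Icc 1 (p - 1), chi p a * ((a : ℤ) - p) := by
    rw [hsplit2, hre2, Finset.sum_congr rfl hterm2, hdrop1, hdrop2,
      ← Finset.sum_add_distrib, Finset.mul_sum]
    apply Finset.sum_congr rfl
    intro a _
    ring
  rw [hS1, hT]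
  ring

private lemma w_mod_four {p : ℕ} (hp : p.Prime) (hmod : p % 8 = 3) :
    ((∑ a ∈ Finset.Icc 1 (p - 1), chi p a * ((a : ℤ) - p) : ℤ) : ZMod 4) = 2 := by
  have hp0 : 0 < p := hp.pos
  rw [Int.cast_sum]
  have hterm : ∀ a ∈ Finset.Icc 1 (p - 1),
      ((chi p a * ((a : ℤ) - p) : ℤ) : ZMod 4) = if a % 4 = 1 then 2 else 0 := by
    intro a ha
    simp only [Finset.mem_Icc] at ha
    by_cases hao : Odd a
    · have ha2 : a % 2 = 1 := Nat.odd_iff.mp hao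
      by_cases h4 : a % 4 = 1
      · rw [if_pos h4]
        have hcast : (((a : ℤ) - p : ℤ) : ZMod 4) = 2 := by
          push_cast
          rw [← ZMod.natCast_mod a 4, ← ZMod.natCast_mod p 4, h4]
          have : p % 4 = 3 := by omega
          rw [this]
          decide
        rcases chi_units hp ha.1 (by omega) hao with h | h <;> rw [h] <;>
          push_cast at hcast ⊢ <;> rw [hcast] <;> decide
      · have h4' : a % 4 = 3 := by omega
        rw [if_neg h4]
        have hcast : (((a : ℤ) - p : ℤ) : ZMod 4) = 0 := by
          push_cast
          rw [← ZMod.natCast_mod a 4, ← ZMod.natCast_mod p 4, h4']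
          have : p % 4 = 3 := by omega
          rw [this]
          decide
        push_cast at hcast ⊢
        rw [hcast, mul_zero]
    · have : chi p a = 0 := if_neg hao
      rw [this, zero_mul]
      rw [if_neg (by rw [Nat.odd_iff] at hao; omega)]
      simp
  rw [Finset.sum_congr rfl hterm, ← Finset.sum_filter, Finset.sum_const]
  have hcard : (Finset.filter (fun a => a % 4 = 1) (Finset.Icc 1 (p - 1))).card
      = 2 * (p / 8) + 1 := by
    have himg : Finset.filter (fun a => a % 4 = 1) (Finset.Icc 1 (p - 1))
        = Finset.image (fun k => 4 * k + 1) (Finset.range (2 * (p / 8) + 1)) := by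
      ext a
      simp only [Finset.mem_filter, Finset.mem_Icc, Finset.mem_image, Finset.mem_range]
      constructor
      · rintro ⟨⟨h1, h2⟩, h4⟩
        exact ⟨a / 4, by omega, by omega⟩
      · rintro ⟨k, hk, rfl⟩
        omega
    rw [himg, Finset.card_image_of_injective _ (fun x y h => by omega), Finset.card_range]
  rw [hcard, nsmul_eq_mul]
  have h1 : ((2 * (p / 8) + 1 : ℕ) : ZMod 4) * 2 = (((2 * (p / 8) + 1) * 2 : ℕ) : ZMod 4) := by
    push_cast
    ring
  rw [h1, ← ZMod.natCast_mod]
  have h2 : (2 * (p / 8) + 1) * 2 % 4 = 2 := by omega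
  rw [h2]
  decide

/-- For a prime `p ≡ 3 (mod 8)` and `d = 4p`, the 2-adic valuation of
`L(χ_d, -1) = -(1/(2d)) ∑_{a=1}^{d} χ_d(a) a²` is exactly `1`, where `χ_d(a)` is the
Jacobi symbol `(p/a)` for odd `a` and `0` for even `a`. -/
theorem stmt3 (p : ℕ) (hp : p.Prime) (hmod : p % 8 = 3) :
    padicValRat 2 ((1 / (2 * ((4 * p : ℕ) : ℚ))) *
      ∑ a ∈ Finset.Icc 1 (4 * p),
        (if Odd a then ((jacobiSym p a : ℤ) : ℚ) else 0) * (a : ℚ) ^ 2) = 1 := by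
  have hp4 : p % 4 = 3 := by omega
  have hp0 : 0 < p := hp.pos
  set W : ℤ := ∑ a ∈ Finset.Icc 1 (p - 1), chi p a * ((a : ℤ) - p) with hWdef
  -- the rational sum is the cast of the integer sum
  have hQ : ∑ a ∈ Finset.Icc 1 (4 * p),
      (if Odd a then ((jacobiSym p a : ℤ) : ℚ) else 0) * (a : ℚ) ^ 2
      = ((∑ a ∈ Finset.Icc 1 (4 * p), chi p a * (a : ℤ) ^ 2 : ℤ) : ℚ) := by
    rw [Int.cast_sum]
    apply Finset.sum_congr rfl
    intro a _
    simp only [chi]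
    split <;> push_cast <;> ring
  have hS : ∑ a ∈ Finset.Icc 1 (4 * p), chi p a * (a : ℤ) ^ 2 = -8 * p * W :=
    sum_identity hp hp4
  have hWmod : ((W : ℤ) : ZMod 4) = 2 := w_mod_four hp hmod
  have hdvd : ((4 : ℕ) : ℤ) ∣ W - 2 := by
    rw [← ZMod.intCast_zmod_eq_zero_iff_dvd]
    push_cast
    rw [hWmod]
    ring
  obtain ⟨k, hk⟩ := hdvd
  have hWk : W = 4 * k + 2 := by omega
  have hpq : (0 : ℚ) < (p : ℚ) := by exact_mod_cast hp0
  have hval : (1 / (2 * ((4 * p : ℕ) : ℚ))) * ((-8 * (p : ℤ) * W : ℤ) : ℚ)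
      = 2 * ((-(2 * k + 1) : ℤ) : ℚ) := by
    rw [hWk]
    push_cast
    field_simp
    ring
  rw [hQ, hS, hval]
  have h2 : (2 : ℚ) ≠ 0 := by norm_num
  have hodd : ¬ (2 : ℤ) ∣ -(2 * k + 1) := by omega
  have hu : ((-(2 * k + 1) : ℤ) : ℚ) ≠ 0 := by
    simp only [ne_eq, Int.cast_eq_zero]
    omega
  have h21 : padicValRat 2 (2 : ℚ) = 1 := by
    rw [show (2 : ℚ) = ((2 : ℕ) : ℚ) by norm_num, padicValRat.self (by norm_num)]
  rw [padicValRat.mul h2 hu, h21, padicValRat.of_int,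
    padicValInt.eq_zero_of_not_dvd (by exact_mod_cast hodd)]
  ring
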